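/- Define the three-dimensional vector field G = (G₁, G₂, G₃) on ℝ³ by G₁(H,σ,Φ) := (−24πΦ² − (9/8)(σ² + H²) − (3/4)σH − (1/3)(1 − H²))·(1 − H²), G₂(H,σ,Φ) := (24πΦ² + (9/8)σ² − (9/4)Hσ − (1/3)(1 − H²) − (15/8)H²) + Hσ·(24πΦ² + (9/8)(σ² + H²) + (3/4)Hσ + (1/3)(1 − H²)), G₃(H,σ,Φ) := (24πΦ² + (9/8)(σ² + H²) + (3/4)Hσ + (1/3)(1 − H²))·HΦ − 3HΦ, and let f₂(s) := (1/(8√π))·√(−3s² + 2s + 5) for −1 ≤ s ≤ 5/3. Then for every s ∈ [−1, 5/3] the points (−1, s, f₂(s)) and (−1, s, −f₂(s)) are equilibrium points of G, i.e. G(−1, s, ±f₂(s)) = (0, 0, 0). -/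
import Mathlib


open Real

/-- First component of the compactified scalar-field vector field. -/
noncomputable def G₁ (H σ Φ : ℝ) : ℝ :=
  (-24 * π * Φ ^ 2 - (9 / 8) * (σ ^ 2 + H ^ 2) - (3 / 4) * (σ * H)
      - (1 / 3) * (1 - H ^ 2)) * (1 - H ^ 2)

/-- Second component of the compactified scalar-field vector field. -/
noncomputable def G₂ (H σ Φ : ℝ) : ℝ :=
  (24 * π * Φ ^ 2 + (9 / 8) * σ ^ 2 - (9 / 4) * (H * σ) - (1 / 3) * (1 - H ^ 2)
      - (15 / 8) * H ^ 2)
    + H * σ * (24 * π * Φ ^ 2 + (9 / 8) * (σ ^ 2 + H ^ 2) + (3 / 4) * (H * σ)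
      + (1 / 3) * (1 - H ^ 2))

/-- Third component of the compactified scalar-field vector field. -/
noncomputable def G₃ (H σ Φ : ℝ) : ℝ :=
  (24 * π * Φ ^ 2 + (9 / 8) * (σ ^ 2 + H ^ 2) + (3 / 4) * (H * σ)
      + (1 / 3) * (1 - H ^ 2)) * (H * Φ) - 3 * (H * Φ)

/-- The profile `f₂` of the fixed-point curves at the past boundary. -/
noncomputable def f₂ (s : ℝ) : ℝ :=
  (1 / (8 * Real.sqrt π)) * Real.sqrt (-3 * s ^ 2 + 2 * s + 5)

/-- For every `s ∈ [−1, 5/3]`, the points `(−1, s, ±f₂(s))` are equilibrium points of the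
compactified Einstein–scalar-field vector field `G = (G₁, G₂, G₃)`. -/
theorem fixed_point_curves_past_boundary :
    ∀ s ∈ Set.Icc (-1 : ℝ) (5 / 3),
      (G₁ (-1) s (f₂ s) = 0 ∧ G₂ (-1) s (f₂ s) = 0 ∧ G₃ (-1) s (f₂ s) = 0) ∧
      (G₁ (-1) s (-f₂ s) = 0 ∧ G₂ (-1) s (-f₂ s) = 0 ∧ G₃ (-1) s (-f₂ s) = 0) := by
  intro s hs
  obtain ⟨h1, h2⟩ := hs
  have hπ : (0:ℝ) < π := Real.pi_pos
  have hq : (0:ℝ) ≤ -3 * s ^ 2 + 2 * s + 5 := by nlinarith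
  have hsp : Real.sqrt π ^ 2 = π := Real.sq_sqrt hπ.le
  have hsq : f₂ s ^ 2 = (-3 * s ^ 2 + 2 * s + 5) / (64 * π) := by
    have hc : (1 / (8 * Real.sqrt π)) ^ 2 = 1 / (64 * π) := by
      rw [div_pow, mul_pow, hsp]; norm_num
    rw [f₂, mul_pow, Real.sq_sqrt hq, hc]
    ring
  have key : 24 * π * f₂ s ^ 2 = (3/8) * (-3 * s ^ 2 + 2 * s + 5) := by
    rw [hsq]; field_simp; ring
  have keyn : 24 * π * (-f₂ s) ^ 2 = (3/8) * (-3 * s ^ 2 + 2 * s + 5) := by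
    rw [neg_pow]; simpa using key
  refine ⟨⟨?_, ?_, ?_⟩, ⟨?_, ?_, ?_⟩⟩ <;> simp only [G₁, G₂, G₃]
  · ring
  · linear_combination (1 - s) * key
  · linear_combination (-(f₂ s)) * key
  · ring
  · linear_combination (1 - s) * keyn
  · linear_combination (f₂ s) * keyn
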